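/- Let A ⊆ ℝ^d be open and k, l ≥ 1 with l ≥ k. Let 𝒳_{k+1} and 𝒳_{l+1} be sets of k+1 and l+1 of the i.i.d. points sharing exactly j points in common. Then E[h_{n,r,k+1,A,ρ}(𝒳_{k+1}) · h_{n,r,l+1,A,ρ}(𝒳_{l+1})] = ∏_{i=1}^{l} p_i^{C(k+1,i+1) + C(l+1,i+1) − C(j,i+1)} · E[h_{n,r,k+1,A}(𝒳_{k+1}) · h_{n,r,l+1,A}(𝒳_{l+1})], and the same identity holds with h replaced by the Čech indicators 𝔥. -/

import Mathlib

open MeasureTheory ProbabilityTheory Filter Finset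
open scoped ENNReal NNReal ProbabilityTheory Topology

noncomputable section

/-- Points of Euclidean space `ℝ^d`. -/
abbrev Pt (d : ℕ) : Type := EuclideanSpace ℝ (Fin d)

/-- Lexicographic (weak) order on `ℝ^d`. -/
def lexLe {d : ℕ} (x y : Pt d) : Prop :=
  x = y ∨ ∃ i : Fin d, (∀ j : Fin d, j < i → x j = y j) ∧ x i < y i

/-- The lexicographically smallest among the points `Y i`, `i ∈ S`, lies in `A`. -/
def lmpIn {d : ℕ} (Y : ℕ → Pt d) (S : Finset ℕ) (A : Set (Pt d)) : Prop :=
  ∃ i ∈ S, (∀ j ∈ S, lexLe (Y i) (Y j)) ∧ Y i ∈ A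

/-- Vietoris–Rips condition at scale `r`: the points indexed by `S` are
pairwise within distance `r`. -/
def ripsCond {d : ℕ} (Y : ℕ → Pt d) (r : ℝ) (S : Finset ℕ) : Prop :=
  ∀ i ∈ S, ∀ j ∈ S, dist (Y i) (Y j) ≤ r

/-- Čech condition at scale `r`: the closed balls of radius `r/2` centered at the
points indexed by `S` have a common point. -/
def cechCond {d : ℕ} (Y : ℕ → Pt d) (r : ℝ) (S : Finset ℕ) : Prop :=
  ∃ z : Pt d, ∀ i ∈ S, dist z (Y i) ≤ r / 2

/-- `S` spans a face of the soft complex with geometric condition `geo` and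
retention data `V`: the geometric condition holds, and every sub-face of
dimension at least 1 (i.e. every subset with at least 2 elements) is retained. -/
def softFace {d : ℕ} (geo : (ℕ → Pt d) → ℝ → Finset ℕ → Prop)
    (Y : ℕ → Pt d) (V : Finset ℕ → Bool) (r : ℝ) (S : Finset ℕ) : Prop :=
  geo Y r S ∧ ∀ T : Finset ℕ, T ⊆ S → 2 ≤ T.card → V T = true

open Classical in
/-- The number of `k`-faces of the soft complex built on the first `m` points,
whose lexicographically smallest vertex lies in `A`. -/
def faceCount {d : ℕ} (geo : (ℕ → Pt d) → ℝ → Finset ℕ → Prop)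
    (Y : ℕ → Pt d) (V : Finset ℕ → Bool) (r : ℝ) (A : Set (Pt d)) (k m : ℕ) : ℕ :=
  (((Finset.range m).powersetCard (k + 1)).filter
    (fun S => softFace geo Y V r S ∧ lmpIn Y S A)).card

/-- Prepend the origin to a tuple of points: `withZero y 0 = 0`,
`withZero y i = y (i-1)` for `1 ≤ i ≤ m`. -/
def withZero {d m : ℕ} (y : Fin m → Pt d) : ℕ → Pt d :=
  fun i => if h : 1 ≤ i ∧ i ≤ m then y ⟨i - 1, by omega⟩ else 0

open Classical in
/-- The constant `μ_{k+1,A}` (for `geo = ripsCond`) resp. `ν_{k+1,A}`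
(for `geo = cechCond`). -/
def geomConst {d : ℕ} (geo : (ℕ → Pt d) → ℝ → Finset ℕ → Prop)
    (k : ℕ) (f : Pt d → ℝ) (A : Set (Pt d)) : ℝ :=
  (((k + 1).factorial : ℝ))⁻¹ * (∫ x in A, f x ^ (k + 1)) *
    ∫ y : Fin k → Pt d, (if geo (withZero y) 1 (Finset.range (k + 1)) then (1 : ℝ) else 0)

/-- Cumulative distribution function of the standard normal distribution. -/
def stdGaussCDF (t : ℝ) : ℝ := ((gaussianReal 0 1) (Set.Iic t)).toReal

/-- `Z n` converges in distribution to the standard normal `N(0,1)`. -/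
def TendstoStdGauss {Ω : Type*} [MeasureSpace Ω] (Z : ℕ → Ω → ℝ) : Prop :=
  ∀ t : ℝ, Tendsto (fun n => (ℙ {ω | Z n ω ≤ t}).toReal) atTop (𝓝 (stdGaussCDF t))

/-- `F n ∼ G n`: asymptotic equivalence. -/
def Asymp (F G : ℕ → ℝ) : Prop := Tendsto (fun n => F n / G n) atTop (𝓝 1)

/-- Covariance of two real random variables. -/
def cov {Ω : Type*} [MeasureSpace Ω] (Z W : Ω → ℝ) : ℝ :=
  (∫ ω, Z ω * W ω) - (∫ ω, Z ω) * (∫ ω, W ω)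

open Classical in
/-- The number of `(k+1)`-subsets of the first `m` points which span a `k`-simplex
(geometric condition `geo`), have lexicographically smallest point in `A`, and form
a connected component: no other point lies within distance `r` of the subset. -/
def compCount {d : ℕ} (geo : (ℕ → Pt d) → ℝ → Finset ℕ → Prop)
    (Y : ℕ → Pt d) (r : ℝ) (A : Set (Pt d)) (k m : ℕ) : ℕ :=
  (((Finset.range m).powersetCard (k + 1)).filter
    (fun S => geo Y r S ∧ lmpIn Y S A ∧
      ∀ j ∈ Finset.range m, j ∉ S → ∀ i ∈ S, r < dist (Y j) (Y i))).card

open Classical in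
/-- The constant `Φ_{j,A}(f_k,f_l)` (for `geo = ripsCond`) resp. `Θ_{j,A}(f_k,f_l)`
(for `geo = cechCond`). -/
def PhiConst {d : ℕ} (geo : (ℕ → Pt d) → ℝ → Finset ℕ → Prop)
    (k l j : ℕ) (f : Pt d → ℝ) (A : Set (Pt d)) : ℝ :=
  ((∫ x in A, f x ^ (k + l + 2 - j)) /
      ((j.factorial : ℝ) * (k + 1 - j).factorial * (l + 1 - j).factorial)) *
    ∫ y : Fin (k + l + 1 - j) → Pt d,
      (if geo (withZero y) 1 (Finset.range (k + 1)) ∧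
          geo (withZero y) 1 (Finset.range j ∪ Finset.Ico (k + 1) (k + l + 2 - j))
        then (1 : ℝ) else 0)

/-- The axis-parallel half-open cube of side length `r` at lattice position `v`. -/
def cube {d : ℕ} (r : ℝ) (v : Fin d → ℤ) : Set (Pt d) :=
  {x | ∀ i : Fin d, (v i : ℝ) * r ≤ x i ∧ x i < ((v i : ℝ) + 1) * r}

section Aux

-- coordinate measurability
lemma meas_coord {d : ℕ} (i : ℕ) (c : Fin d) : Measurable (fun Y : ℕ → Pt d => Y i c) :=
  (measurable_pi_apply c).comp ((WithLp.measurable_ofLp 2 (Fin d → ℝ)).comp (measurable_pi_apply i))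

lemma measurableSet_lexLe {d : ℕ} (a b : ℕ) :
    MeasurableSet {Y : ℕ → Pt d | lexLe (Y a) (Y b)} := by
  have : {Y : ℕ → Pt d | lexLe (Y a) (Y b)} =
      (⋂ c : Fin d, {Y : ℕ → Pt d | Y a c = Y b c}) ∪
      ⋃ i : Fin d, ((⋂ c : Fin d, {Y : ℕ → Pt d | c < i → Y a c = Y b c}) ∩
        {Y : ℕ → Pt d | Y a i < Y b i}) := by
    ext Y
    simp only [lexLe, Set.mem_setOf_eq, Set.mem_union, Set.mem_iInter, Set.mem_iUnion,
      Set.mem_inter_iff]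
    have : (Y a = Y b) ↔ ∀ c : Fin d, Y a c = Y b c :=
      (WithLp.ofLp_injective 2).eq_iff.symm.trans funext_iff
    tauto
  rw [this]
  refine MeasurableSet.union (MeasurableSet.iInter fun c => ?_)
    (MeasurableSet.iUnion fun i => MeasurableSet.inter (MeasurableSet.iInter fun c => ?_) ?_)
  · exact measurableSet_eq_fun (meas_coord a c) (meas_coord b c)
  · by_cases h : c < i
    · simp only [h, true_implies]
      exact measurableSet_eq_fun (meas_coord a c) (meas_coord b c)
    · simp only [h, false_implies, Set.setOf_true]
      exact MeasurableSet.univ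
  · exact measurableSet_lt (meas_coord a i) (meas_coord b i)

lemma measurableSet_lmpIn {d : ℕ} (S : Finset ℕ) {A : Set (Pt d)} (hA : MeasurableSet A) :
    MeasurableSet {Y : ℕ → Pt d | lmpIn Y S A} := by
  have : {Y : ℕ → Pt d | lmpIn Y S A} =
      ⋃ i ∈ S, ((⋂ j ∈ S, {Y : ℕ → Pt d | lexLe (Y i) (Y j)}) ∩ ((fun Y : ℕ → Pt d => Y i) ⁻¹' A)) := by
    ext Y; simp only [lmpIn, Set.mem_setOf_eq, Set.mem_iUnion, Set.mem_inter_iff,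
      Set.mem_preimage, Set.mem_iInter, exists_prop]
  rw [this]
  exact MeasurableSet.biUnion S.countable_toSet fun i _ =>
    (MeasurableSet.biInter S.countable_toSet fun j _ => measurableSet_lexLe i j).inter
      (hA.preimage (measurable_pi_apply i))

lemma measurableSet_rips {d : ℕ} (r : ℝ) (S : Finset ℕ) :
    MeasurableSet {Y : ℕ → Pt d | ripsCond Y r S} := by
  have : {Y : ℕ → Pt d | ripsCond Y r S} =
      ⋂ i ∈ S, ⋂ j ∈ S, {Y : ℕ → Pt d | dist (Y i) (Y j) ≤ r} := by
    ext Y; simp [ripsCond]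
  rw [this]
  exact MeasurableSet.biInter S.countable_toSet fun i _ =>
    MeasurableSet.biInter S.countable_toSet fun j _ =>
      measurableSet_le (Measurable.dist (measurable_pi_apply i) (measurable_pi_apply j))
        measurable_const

lemma isClosed_cech {d : ℕ} (c : ℝ) (S : Finset ℕ) (hS : S.Nonempty) :
    IsClosed {y : S → Pt d | ∃ z : Pt d, ∀ i : S, dist z (y i) ≤ c} := by
  refine IsSeqClosed.isClosed ?_
  intro yseq y hyseq hconv
  obtain ⟨i₀, hi₀⟩ := hS
  choose z hz using hyseq
  -- the sequence n ↦ yseq n i₀ converges to y i₀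
  have hvi : Tendsto (fun n => yseq n ⟨i₀, hi₀⟩) atTop (𝓝 (y ⟨i₀, hi₀⟩)) :=
    (continuous_apply (⟨i₀, hi₀⟩ : S)).continuousAt.tendsto.comp hconv
  have hd : Tendsto (fun n => dist (yseq n ⟨i₀, hi₀⟩) (y ⟨i₀, hi₀⟩)) atTop (𝓝 0) :=
    tendsto_iff_dist_tendsto_zero.mp hvi
  obtain ⟨M, hM⟩ : ∃ M : ℝ, ∀ n, dist (yseq n ⟨i₀, hi₀⟩) (y ⟨i₀, hi₀⟩) ≤ M := by
    obtain ⟨M, hM⟩ := hd.bddAbove_range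
    exact ⟨M, fun n => hM ⟨n, rfl⟩⟩
  have hzb : ∀ n, z n ∈ Metric.closedBall (y ⟨i₀, hi₀⟩) (c + M) := by
    intro n
    have h1 := hz n ⟨i₀, hi₀⟩
    have := dist_triangle (z n) (yseq n ⟨i₀, hi₀⟩) (y ⟨i₀, hi₀⟩)
    simp only [Metric.mem_closedBall]
    linarith [hM n]
  obtain ⟨zl, _, φ, hφ, hzl⟩ := tendsto_subseq_of_bounded Metric.isBounded_closedBall hzb
  refine ⟨zl, fun i => ?_⟩
  have hyi : Tendsto (fun n => yseq (φ n) i) atTop (𝓝 (y i)) :=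
    ((continuous_apply i).continuousAt.tendsto.comp hconv).comp hφ.tendsto_atTop
  have : Tendsto (fun n => dist (z (φ n)) (yseq (φ n) i)) atTop (𝓝 (dist zl (y i))) :=
    hzl.dist hyi
  exact le_of_tendsto this (Eventually.of_forall fun n => hz (φ n) i)

lemma measurableSet_cech {d : ℕ} (r : ℝ) (S : Finset ℕ) :
    MeasurableSet {Y : ℕ → Pt d | cechCond Y r S} := by
  rcases S.eq_empty_or_nonempty with rfl | hS
  · have : {Y : ℕ → Pt d | cechCond Y r ∅} = Set.univ := by
      ext Y; simp [cechCond]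
    rw [this]; exact MeasurableSet.univ
  · have : {Y : ℕ → Pt d | cechCond Y r S} =
        (fun (Y : ℕ → Pt d) (i : S) => Y i) ⁻¹'
          {y : S → Pt d | ∃ z : Pt d, ∀ i : S, dist z (y i) ≤ r / 2} := by
      ext Y
      simp only [cechCond, Set.mem_setOf_eq, Set.mem_preimage]
      constructor
      · rintro ⟨z, hz⟩; exact ⟨z, fun i => hz i i.2⟩
      · rintro ⟨z, hz⟩; exact ⟨z, fun i hi => hz ⟨i, hi⟩⟩
    rw [this]
    exact (isClosed_cech (r / 2) S hS).measurableSet.preimage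
      (measurable_pi_lambda _ fun i => measurable_pi_apply (i : ℕ))

lemma key_lemma {d : ℕ} {Ω : Type*} [MeasureSpace Ω]
    (geo : (ℕ → Pt d) → ℝ → Finset ℕ → Prop)
    (X : ℕ → Ω → Pt d) (c : ℝ)
    (pn : ℕ → ℝ) (V : Finset ℕ → Ω → Bool)
    (hpnn : ∀ i, 0 ≤ pn i)
    (hVprob : ∀ S : Finset ℕ, 2 ≤ S.card →
      (ℙ : Measure Ω) {ω | V S ω = true} = ENNReal.ofReal (pn (S.card - 1)))
    (hVindep : iIndepFun (fun S ω => V S ω) ℙ)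
    (hVX : IndepFun (fun ω S => V S ω) (fun ω i => X i ω) ℙ)
    (A : Set (Pt d))
    (k l j : ℕ) (hk : 1 ≤ k) (hl : 1 ≤ l) (hkl : k ≤ l)
    (S1 S2 : Finset ℕ) (hS1 : S1.card = k + 1) (hS2 : S2.card = l + 1)
    (hS12 : (S1 ∩ S2).card = j)
    (hgeo : MeasurableSet {Y : ℕ → Pt d |
      (geo Y c S1 ∧ lmpIn Y S1 A) ∧ (geo Y c S2 ∧ lmpIn Y S2 A)}) :
    (ℙ {ω | (softFace geo (fun i => X i ω) (fun S => V S ω) c S1 ∧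
        lmpIn (fun i => X i ω) S1 A) ∧ (softFace geo (fun i => X i ω) (fun S => V S ω) c S2 ∧
        lmpIn (fun i => X i ω) S2 A)}).toReal =
      (∏ i ∈ Finset.Icc 1 l,
        pn i ^ ((k + 1).choose (i + 1) + (l + 1).choose (i + 1) - j.choose (i + 1))) *
      (ℙ {ω | (geo (fun i => X i ω) c S1 ∧ lmpIn (fun i => X i ω) S1 A) ∧
        (geo (fun i => X i ω) c S2 ∧ lmpIn (fun i => X i ω) S2 A)}).toReal := by
  classical
  set 𝒯 : Finset (Finset ℕ) := (S1.powerset ∪ S2.powerset).filter (fun T => 2 ≤ T.card) with h𝒯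
  have hmem : ∀ T : Finset ℕ, T ∈ 𝒯 ↔ (T ⊆ S1 ∨ T ⊆ S2) ∧ 2 ≤ T.card := by
    intro T
    simp [h𝒯, Finset.mem_filter, Finset.mem_union, Finset.mem_powerset]
  -- set equality
  have hset : {ω | (softFace geo (fun i => X i ω) (fun S => V S ω) c S1 ∧
        lmpIn (fun i => X i ω) S1 A) ∧ (softFace geo (fun i => X i ω) (fun S => V S ω) c S2 ∧
        lmpIn (fun i => X i ω) S2 A)}
      = ((fun ω (S : Finset ℕ) => V S ω) ⁻¹' {g : Finset ℕ → Bool | ∀ T ∈ 𝒯, g T = true}) ∩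
        ((fun ω (i : ℕ) => X i ω) ⁻¹' {Y : ℕ → Pt d |
          (geo Y c S1 ∧ lmpIn Y S1 A) ∧ (geo Y c S2 ∧ lmpIn Y S2 A)}) := by
    ext ω
    simp only [Set.mem_setOf_eq, Set.mem_inter_iff, Set.mem_preimage, softFace]
    constructor
    · rintro ⟨⟨⟨hg1, hV1⟩, hl1⟩, ⟨hg2, hV2⟩, hl2⟩
      refine ⟨fun T hT => ?_, ⟨hg1, hl1⟩, hg2, hl2⟩
      rcases (hmem T).mp hT with ⟨h | h, hc⟩
      exacts [hV1 T h hc, hV2 T h hc]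
    · rintro ⟨hV, ⟨hg1, hl1⟩, hg2, hl2⟩
      exact ⟨⟨⟨hg1, fun T h1 h2 => hV T ((hmem T).mpr ⟨Or.inl h1, h2⟩)⟩, hl1⟩,
        ⟨hg2, fun T h1 h2 => hV T ((hmem T).mpr ⟨Or.inr h1, h2⟩)⟩, hl2⟩
  have hsU : MeasurableSet {g : Finset ℕ → Bool | ∀ T ∈ 𝒯, g T = true} := by
    have h2 : {g : Finset ℕ → Bool | ∀ T ∈ 𝒯, g T = true} =
        ⋂ T ∈ 𝒯, ((fun g : Finset ℕ → Bool => g T) ⁻¹' {true}) := by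
      ext g; simp
    rw [h2]
    exact MeasurableSet.biInter 𝒯.countable_toSet fun T _ =>
      measurable_pi_apply T (measurableSet_singleton true)
  have hUset : (fun ω (S : Finset ℕ) => V S ω) ⁻¹' {g | ∀ T ∈ 𝒯, g T = true}
      = ⋂ T ∈ 𝒯, {ω | V T ω = true} := by
    ext ω; simp
  have hprodU : (ℙ : Measure Ω) (⋂ T ∈ 𝒯, {ω | V T ω = true})
      = ∏ T ∈ 𝒯, (ℙ : Measure Ω) {ω | V T ω = true} :=
    hVindep.meas_biInter (fun T _ => ⟨{true}, measurableSet_singleton true, rfl⟩)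
  -- the combinatorial count
  have hjk : j ≤ k + 1 := by
    rw [← hS1, ← hS12]; exact Finset.card_le_card Finset.inter_subset_left
  have hcount : ∏ T ∈ 𝒯, pn (T.card - 1) = ∏ i ∈ Finset.Icc 1 l,
      pn i ^ ((k + 1).choose (i + 1) + (l + 1).choose (i + 1) - j.choose (i + 1)) := by
    rw [← Finset.prod_fiberwise_of_maps_to (g := fun T : Finset ℕ => T.card - 1)
      (t := Finset.Icc 1 l) ?_ (fun T => pn (T.card - 1))]
    · refine Finset.prod_congr rfl fun i hi => ?_
      rw [Finset.mem_Icc] at hi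
      have hfib : 𝒯.filter (fun T => T.card - 1 = i)
          = S1.powersetCard (i + 1) ∪ S2.powersetCard (i + 1) := by
        ext T
        simp only [Finset.mem_filter, hmem, Finset.mem_union, Finset.mem_powersetCard]
        constructor
        · rintro ⟨⟨h, hc⟩, hci⟩
          have hcc : T.card = i + 1 := by omega
          tauto
        · rintro (⟨h, hc⟩ | ⟨h, hc⟩) <;> constructor <;> try constructor
          all_goals first | tauto | omega
      have hstep : ∀ T ∈ 𝒯.filter (fun T => T.card - 1 = i), pn (T.card - 1) = pn i := by
        intro T hT
        rw [Finset.mem_filter] at hT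
        rw [hT.2]
      rw [Finset.prod_congr rfl hstep, Finset.prod_const, hfib]
      congr 1
      have hint : S1.powersetCard (i + 1) ∩ S2.powersetCard (i + 1)
          = (S1 ∩ S2).powersetCard (i + 1) := by
        ext T
        simp only [Finset.mem_inter, Finset.mem_powersetCard, Finset.subset_inter_iff]
        tauto
      have h1 := Finset.card_union_add_card_inter (S1.powersetCard (i + 1))
        (S2.powersetCard (i + 1))
      rw [hint] at h1
      simp only [Finset.card_powersetCard, hS1, hS2, hS12] at h1
      have hle : j.choose (i + 1) ≤ (k + 1).choose (i + 1) := Nat.choose_le_choose _ hjk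
      omega
    · intro T hT
      rw [hmem] at hT
      rw [Finset.mem_Icc]
      have : T.card ≤ l + 1 := by
        rcases hT.1 with h | h
        · calc T.card ≤ S1.card := Finset.card_le_card h
            _ = k + 1 := hS1
            _ ≤ l + 1 := by omega
        · calc T.card ≤ S2.card := Finset.card_le_card h
            _ = l + 1 := hS2
      have h2 := hT.2
      show 1 ≤ T.card - 1 ∧ T.card - 1 ≤ l
      omega
  -- assemble
  rw [hset, hVX.measure_inter_preimage_eq_mul _ _ hsU hgeo, ENNReal.toReal_mul, hUset, hprodU]
  have hPT : ∀ T ∈ 𝒯, (ℙ : Measure Ω) {ω | V T ω = true} = ENNReal.ofReal (pn (T.card - 1)) :=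
    fun T hT => hVprob T ((hmem T).mp hT).2
  rw [Finset.prod_congr rfl hPT, ENNReal.toReal_prod]
  have : ∀ T ∈ 𝒯, (ENNReal.ofReal (pn (T.card - 1))).toReal = pn (T.card - 1) :=
    fun T _ => ENNReal.toReal_ofReal (hpnn _)
  rw [Finset.prod_congr rfl this, hcount]
  rfl

end Aux

/-- **Product of soft face indicators over two overlapping simplices.** If
`𝒳_{k+1}` and `𝒳_{l+1}` (given by index sets `S1`, `S2` of cardinalities `k+1`
and `l+1`) share exactly `j` points, then `E[h_ρ(𝒳_{k+1})·h_ρ(𝒳_{l+1})] =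
∏_{i=1}^l p_i^{C(k+1,i+1)+C(l+1,i+1)−C(j,i+1)} · E[h(𝒳_{k+1})·h(𝒳_{l+1})]`, for the
Rips and Čech indicators alike. -/
theorem statement_5
    {Ω : Type*} [MeasureSpace Ω]
    (hprob : IsProbabilityMeasure (ℙ : Measure Ω))
    (d : ℕ) (hd : 1 ≤ d)
    (X : ℕ → Ω → Pt d) (f : Pt d → ℝ) (r : ℕ → ℝ)
    (hXmeas : ∀ i, Measurable (X i))
    (hXindep : iIndepFun X ℙ)
    (hXlaw : ∀ i, Measure.map (X i) ℙ = volume.withDensity (fun x => ENNReal.ofReal (f x)))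
    (hf0 : ∀ x, 0 ≤ f x) (hfbdd : ∃ C : ℝ, ∀ x, f x ≤ C)
    (hrpos : ∀ n, 0 < r n) (hr0 : Tendsto r atTop (𝓝 0))
    (p : ℕ → ℕ → ℝ) (U : ℕ → Finset ℕ → Ω → Bool)
    (hp : ∀ i n, p i n ∈ Set.Icc (0 : ℝ) 1)
    (hUmeas : ∀ n S, Measurable (U n S))
    (hUprob : ∀ n (S : Finset ℕ), 2 ≤ S.card →
      ℙ {ω | U n S ω = true} = ENNReal.ofReal (p (S.card - 1) n))
    (hUindep : ∀ n, iIndepFun (fun S ω => U n S ω) ℙ)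
    (hUX : ∀ n, IndepFun (fun ω S => U n S ω) (fun ω i => X i ω) ℙ)
    (A : Set (Pt d)) (hA : IsOpen A)
    (k l j : ℕ) (hk : 1 ≤ k) (hl : 1 ≤ l) (hkl : k ≤ l)
    (S1 S2 : Finset ℕ) (hS1 : S1.card = k + 1) (hS2 : S2.card = l + 1)
    (hS12 : (S1 ∩ S2).card = j) :
    ∀ n : ℕ,
      (ℙ {ω | (softFace ripsCond (fun i => X i ω) (fun S => U n S ω) (r n) S1 ∧ lmpIn (fun i => X i ω) S1 A) ∧ (softFace ripsCond (fun i => X i ω) (fun S => U n S ω) (r n) S2 ∧ lmpIn (fun i => X i ω) S2 A)}).toReal =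
        (∏ i ∈ Finset.Icc 1 l, p i n ^ ((k + 1).choose (i + 1) + (l + 1).choose (i + 1) - j.choose (i + 1))) * (ℙ {ω | (ripsCond (fun i => X i ω) (r n) S1 ∧ lmpIn (fun i => X i ω) S1 A) ∧ (ripsCond (fun i => X i ω) (r n) S2 ∧ lmpIn (fun i => X i ω) S2 A)}).toReal ∧
      (ℙ {ω | (softFace cechCond (fun i => X i ω) (fun S => U n S ω) (r n) S1 ∧ lmpIn (fun i => X i ω) S1 A) ∧ (softFace cechCond (fun i => X i ω) (fun S => U n S ω) (r n) S2 ∧ lmpIn (fun i => X i ω) S2 A)}).toReal =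
        (∏ i ∈ Finset.Icc 1 l, p i n ^ ((k + 1).choose (i + 1) + (l + 1).choose (i + 1) - j.choose (i + 1))) * (ℙ {ω | (cechCond (fun i => X i ω) (r n) S1 ∧ lmpIn (fun i => X i ω) S1 A) ∧ (cechCond (fun i => X i ω) (r n) S2 ∧ lmpIn (fun i => X i ω) S2 A)}).toReal := by
  intro n
  constructor
  · exact key_lemma ripsCond X (r n) (fun i => p i n) (fun S ω => U n S ω)
      (fun i => (hp i n).1) (fun S hS => hUprob n S hS) (hUindep n) (hUX n) A k l j hk hl hkl
      S1 S2 hS1 hS2 hS12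
      (((measurableSet_rips (r n) S1).inter (measurableSet_lmpIn S1 hA.measurableSet)).inter
        ((measurableSet_rips (r n) S2).inter (measurableSet_lmpIn S2 hA.measurableSet)))
  · exact key_lemma cechCond X (r n) (fun i => p i n) (fun S ω => U n S ω)
      (fun i => (hp i n).1) (fun S hS => hUprob n S hS) (hUindep n) (hUX n) A k l j hk hl hkl
      S1 S2 hS1 hS2 hS12
      (((measurableSet_cech (r n) S1).inter (measurableSet_lmpIn S1 hA.measurableSet)).inter
        ((measurableSet_cech (r n) S2).inter (measurableSet_lmpIn S2 hA.measurableSet)))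


end
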